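/- Let f : 2^[n] → ℝ be supermodular and p ∈ ℝⁿ a price vector. For any i ∈ [n], δ ≥ 0, and any S ∈ D_f(p), there exists T ∈ D_f(p + δ·e_i) with T ⊆ S. -/
import Mathlib

lemma incr_lemma {n : ℕ} (f : Finset (Fin n) → ℝ)
    (hf : ∀ S T : Finset (Fin n), S ⊆ T → ∀ j ∉ T,
      f (insert j S) - f S ≤ f (insert j T) - f T)
    (A B : Finset (Fin n)) (hAB : A ⊆ B) :
    ∀ C : Finset (Fin n), Disjoint C B → f (A ∪ C) - f A ≤ f (B ∪ C) - f B := by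
  intro C
  induction C using Finset.induction_on with
  | empty => simp
  | @insert j C hj ih =>
    intro hdisj
    have hdC : Disjoint C B := (Finset.disjoint_insert_left.mp hdisj).2
    have hjB : j ∉ B := (Finset.disjoint_insert_left.mp hdisj).1
    have hjBC : j ∉ B ∪ C := by simp [hjB, hj]
    have hsub : A ∪ C ⊆ B ∪ C := Finset.union_subset_union_left hAB
    have h1 := hf (A ∪ C) (B ∪ C) hsub j hjBC
    have h2 := ih hdC
    have e1 : A ∪ insert j C = insert j (A ∪ C) := by
      ext x; simp [or_comm, or_left_comm]
    have e2 : B ∪ insert j C = insert j (B ∪ C) := by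
      ext x; simp [or_comm, or_left_comm]
    rw [e1, e2]; linarith

lemma supermod {n : ℕ} (f : Finset (Fin n) → ℝ)
    (hf : ∀ S T : Finset (Fin n), S ⊆ T → ∀ j ∉ T,
      f (insert j S) - f S ≤ f (insert j T) - f T)
    (A B : Finset (Fin n)) : f A + f B ≤ f (A ∪ B) + f (A ∩ B) := by
  have h := incr_lemma f hf (A ∩ B) B Finset.inter_subset_right (A \ B)
    (Finset.sdiff_disjoint)
  have e1 : A ∩ B ∪ A \ B = A := by
    ext x; simp only [Finset.mem_union, Finset.mem_inter, Finset.mem_sdiff]; tauto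
  have e2 : B ∪ A \ B = A ∪ B := by
    ext x; simp only [Finset.mem_union, Finset.mem_sdiff]; tauto
  rw [e1, e2] at h; linarith

/-- Supermodular functions are gross complements: raising one item's price shrinks
some demanded bundle. -/
theorem stmt5 (n : ℕ) (f : Finset (Fin n) → ℝ)
    (hf : ∀ S T : Finset (Fin n), S ⊆ T → ∀ j ∉ T,
      f (insert j S) - f S ≤ f (insert j T) - f T)
    (p : Fin n → ℝ) (i : Fin n) (δ : ℝ) (hδ : 0 ≤ δ)
    (S : Finset (Fin n)) (hS : ∀ W, f W - ∑ j ∈ W, p j ≤ f S - ∑ j ∈ S, p j) :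
    ∃ T ⊆ S, ∀ W, f W - ∑ j ∈ W, (p j + if j = i then δ else 0) ≤
      f T - ∑ j ∈ T, (p j + if j = i then δ else 0) := by
  set p' : Fin n → ℝ := fun j => p j + if j = i then δ else 0 with hp'
  obtain ⟨T, hTmem, hTmax⟩ := S.powerset.exists_max_image
    (fun W => f W - ∑ j ∈ W, p' j) ⟨∅, Finset.empty_mem_powerset S⟩
  refine ⟨T, Finset.mem_powerset.mp hTmem, fun W => ?_⟩
  have hWS : f (W ∩ S) - ∑ j ∈ W ∩ S, p' j ≤ f T - ∑ j ∈ T, p' j :=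
    hTmax _ (Finset.mem_powerset.mpr (Finset.inter_subset_right))
  have hsup := supermod f hf W S
  have hSopt := hS (W ∪ S)
  -- sum decompositions
  have hd1 : ∑ j ∈ W ∩ S, p' j + ∑ j ∈ W \ S, p' j = ∑ j ∈ W, p' j :=
    Finset.sum_inter_add_sum_sdiff W S p'
  have hd2 : ∑ j ∈ W ∪ S, p j = ∑ j ∈ S, p j + ∑ j ∈ W \ S, p j := by
    have e : W ∪ S = S ∪ W \ S := by
      ext x; simp only [Finset.mem_union, Finset.mem_sdiff]; tauto
    rw [e, Finset.sum_union Finset.sdiff_disjoint.symm]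
  have hmono : ∑ j ∈ W \ S, p j ≤ ∑ j ∈ W \ S, p' j := by
    apply Finset.sum_le_sum
    intro j _
    simp only [hp']
    split <;> linarith
  suffices h : f W - ∑ j ∈ W, p' j ≤ f (W ∩ S) - ∑ j ∈ W ∩ S, p' j by linarith
  linarith
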